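/- For nonzero codewords r, r' ∈ R and c, c' ∈ C over F_q, the rank-one product matrices (r_i c_j) and (r'_i c'_j) are equal if and only if there exists a nonzero λ ∈ F_q with r' = λ r and c' = λ^{-1} c. Consequently, the number of distinct nonzero rank-one codewords of the form (r_i c_j) with wt(r) = a and wt(c) = b equals E_R(a) * E_C(b) / (q-1), where E_R, E_C are weight enumerators, provided a, b ≥ 1. -/

import Mathlib

lemma rank1_eq_iff {F : Type*} [Field F] {nr nc : ℕ}
    {r r' : Fin nr → F} {c c' : Fin nc → F}
    (hr : r ≠ 0) (hc : c ≠ 0) :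
    ((fun (i : Fin nc) (j : Fin nr) => c i * r j) = fun i j => c' i * r' j) ↔
      ∃ l : F, l ≠ 0 ∧ r' = l • r ∧ c' = l⁻¹ • c := by
  obtain ⟨j0, hj0⟩ : ∃ j, r j ≠ 0 := by
    by_contra h; push_neg at h; exact hr (funext fun j => h j)
  obtain ⟨i0, hi0⟩ : ∃ i, c i ≠ 0 := by
    by_contra h; push_neg at h; exact hc (funext fun i => h i)
  constructor
  · intro h
    have key : ∀ i j, c i * r j = c' i * r' j := fun i j => congrFun (congrFun h i) j
    have h1 : c' i0 * r' j0 ≠ 0 := by rw [← key]; exact mul_ne_zero hi0 hj0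
    have hci0' : c' i0 ≠ 0 := fun h => by simp [h] at h1
    refine ⟨c i0 / c' i0, div_ne_zero hi0 hci0', ?_, ?_⟩
    · funext j
      have hk := key i0 j
      simp only [Pi.smul_apply, smul_eq_mul]
      field_simp
      linear_combination -hk
    · funext i
      have hk := key i j0
      have hr'j0 : r' j0 = (c i0 / c' i0) * r j0 := by
        have h2 := key i0 j0
        field_simp
        linear_combination -h2
      rw [hr'j0] at hk
      simp only [Pi.smul_apply, smul_eq_mul]
      field_simp
      field_simp at hk
      apply mul_right_cancel₀ hj0
      linear_combination -(r j0) * hk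
  · rintro ⟨l, hl, rfl, rfl⟩
    funext i j
    simp only [Pi.smul_apply, smul_eq_mul]
    field_simp

lemma hammingNorm_smul_ne {F : Type*} [Field F] [DecidableEq F] {n : ℕ} {l : F} (hl : l ≠ 0)
    (x : Fin n → F) : hammingNorm (l • x) = hammingNorm x :=
  hammingNorm_smul (fun _ => smul_right_injective F hl) x

/-- Two nonzero rank-one product matrices `(r_i c_j)` and `(r'_i c'_j)` are equal iff
`r' = λ r` and `c' = λ⁻¹ c` for some nonzero `λ ∈ F_q`; consequently, the number of
distinct nonzero rank-one codewords built from row codewords of weight `a` and column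
codewords of weight `b` equals `E_R(a) E_C(b) / (q-1)` (stated multiplicatively). -/
theorem stmt5 (F : Type*) [Field F] [Fintype F] [DecidableEq F] (q nr nc : ℕ)
    (hq : Fintype.card F = q)
    (R : Submodule F (Fin nr → F)) (C : Submodule F (Fin nc → F)) :
    (∀ r r' : Fin nr → F, ∀ c c' : Fin nc → F,
      r ∈ R → r' ∈ R → c ∈ C → c' ∈ C → r ≠ 0 → r' ≠ 0 → c ≠ 0 → c' ≠ 0 →
      (((fun (i : Fin nc) (j : Fin nr) => c i * r j) = fun i j => c' i * r' j) ↔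
        ∃ l : F, l ≠ 0 ∧ r' = l • r ∧ c' = l⁻¹ • c)) ∧
    (∀ a b : ℕ, 1 ≤ a → 1 ≤ b →
      Set.ncard {M : Fin nc → Fin nr → F |
          ∃ r ∈ R, ∃ c ∈ C, hammingNorm r = a ∧ hammingNorm c = b ∧
            M = fun i j => c i * r j} * (q - 1)
        = Set.ncard {r | r ∈ (R : Set (Fin nr → F)) ∧ hammingNorm r = a} *
          Set.ncard {c | c ∈ (C : Set (Fin nc → F)) ∧ hammingNorm c = b}) := by
  constructor
  · intro r r' c c' _ _ _ _ hr _ hc _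
    exact rank1_eq_iff hr hc
  · intro a b ha hb
    classical
    have hA : ({r | r ∈ (R : Set (Fin nr → F)) ∧ hammingNorm r = a}).Finite := Set.toFinite _
    have hB : ({c | c ∈ (C : Set (Fin nc → F)) ∧ hammingNorm c = b}).Finite := Set.toFinite _
    have hM : ({M : Fin nc → Fin nr → F |
        ∃ r ∈ R, ∃ c ∈ C, hammingNorm r = a ∧ hammingNorm c = b ∧
          M = fun i j => c i * r j}).Finite := Set.toFinite _
    rw [Set.ncard_eq_toFinset_card _ hA, Set.ncard_eq_toFinset_card _ hB,
      Set.ncard_eq_toFinset_card _ hM]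
    set A := hA.toFinset with hAdef
    set B := hB.toFinset with hBdef
    set M := hM.toFinset with hMdef
    rw [← Finset.card_product]
    have hmap : ∀ p ∈ A ×ˢ B, (fun (i : Fin nc) (j : Fin nr) => p.2 i * p.1 j) ∈ M := by
      rintro ⟨r, c⟩ hp
      rw [Finset.mem_product] at hp
      simp only [hAdef, hBdef, Set.Finite.mem_toFinset, Set.mem_setOf_eq] at hp
      simp only [hMdef, Set.Finite.mem_toFinset, Set.mem_setOf_eq]
      exact ⟨r, hp.1.1, c, hp.2.1, hp.1.2, hp.2.2, rfl⟩
    rw [Finset.card_eq_sum_card_fiberwise hmap]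
    have hfiber : ∀ m ∈ M,
        ((A ×ˢ B).filter (fun p => (fun (i : Fin nc) (j : Fin nr) => p.2 i * p.1 j) = m)).card
          = q - 1 := by
      intro m hm
      simp only [hMdef, Set.Finite.mem_toFinset, Set.mem_setOf_eq] at hm
      obtain ⟨r0, hr0R, c0, hc0C, hr0a, hc0b, rfl⟩ := hm
      have hr0 : r0 ≠ 0 := by
        intro h; rw [h] at hr0a; simp [hammingNorm] at hr0a; omega
      have hc0 : c0 ≠ 0 := by
        intro h; rw [h] at hc0b; simp [hammingNorm] at hc0b; omega
      rw [show q - 1 = ((Finset.univ : Finset F).filter (· ≠ 0)).card by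
        rw [Finset.filter_ne', Finset.card_erase_of_mem (Finset.mem_univ 0),
          Finset.card_univ, hq]]
      obtain ⟨j0, hj0⟩ : ∃ j, r0 j ≠ 0 := by
        by_contra h; push_neg at h; exact hr0 (funext fun j => h j)
      refine (Finset.card_bij (fun l _ => (l • r0, l⁻¹ • c0)) ?_ ?_ ?_).symm
      · intro l hl
        have hl' := (Finset.mem_filter.mp hl).2
        rw [Finset.mem_filter, Finset.mem_product]
        refine ⟨⟨?_, ?_⟩, ?_⟩
        · simp only [hAdef, Set.Finite.mem_toFinset, Set.mem_setOf_eq]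
          exact ⟨R.smul_mem l hr0R, by rw [hammingNorm_smul_ne hl', hr0a]⟩
        · simp only [hBdef, Set.Finite.mem_toFinset, Set.mem_setOf_eq]
          exact ⟨C.smul_mem l⁻¹ hc0C, by rw [hammingNorm_smul_ne (inv_ne_zero hl'), hc0b]⟩
        · funext i j
          simp only [Pi.smul_apply, smul_eq_mul]
          field_simp
      · intro l hl l' hl' heq
        have h1 : l • r0 = l' • r0 := congrArg Prod.fst heq
        have h2 := congrFun h1 j0
        simp only [Pi.smul_apply, smul_eq_mul] at h2
        exact mul_right_cancel₀ hj0 h2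
      · rintro ⟨r, c⟩ hp
        rw [Finset.mem_filter, Finset.mem_product] at hp
        obtain ⟨l, hl, hrl, hcl⟩ := (rank1_eq_iff hr0 hc0).mp hp.2.symm
        refine ⟨l, ?_, ?_⟩
        · rw [Finset.mem_filter]; exact ⟨Finset.mem_univ l, hl⟩
        · exact Prod.ext hrl.symm hcl.symm
    rw [Finset.sum_congr rfl hfiber, Finset.sum_const, smul_eq_mul]
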